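/- Let (Ω, μ) be a finite measure space, let S : L²(μ) → L²(μ) be a continuous linear operator with Hilbert-space adjoint S*, let f, y_d ∈ L²(μ), let p > 1, α > 0, β > 0, M > 0, and suppose the function S*(Sf − y_d) is essentially bounded with essential supremum m. Define the reduced cost J(u) = (1/2)‖Su + Sf − y_d‖²_{L²} + (α/2)‖u‖²_{L²} + β ∫_Ω |u(x)|^{1/p} dμ(x). If β ≥ M^{(p−1)/p} · m, then u = 0 is a minimizer of J over the ball {u ∈ L²(μ) : |u(x)| ≤ M a.e.}; that is, J(u) ≥ J(0) for every u ∈ L²(μ) with |u(x)| ≤ M almost everywhere. -/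

import Mathlib

open MeasureTheory

theorem stmt_0 {Ω : Type*} [MeasurableSpace Ω] (μ : Measure Ω) [IsFiniteMeasure μ]
    (S : Lp ℝ 2 μ →L[ℝ] Lp ℝ 2 μ) (f yd : Lp ℝ 2 μ)
    (p α β M m : ℝ) (hp : 1 < p) (hα : 0 < α) (hβ : 0 < β) (hM : 0 < M)
    (hm : eLpNorm (((ContinuousLinearMap.adjoint S) (S f - yd) : Lp ℝ 2 μ) : Ω → ℝ) ⊤ μ
        = ENNReal.ofReal m)
    (hβ₀ : M ^ ((p - 1)/p) * m ≤ β)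
    (J : Lp ℝ 2 μ → ℝ)
    (hJ : ∀ u : Lp ℝ 2 μ,
      J u = (1/2) * ‖S u + S f - yd‖^2 + (α/2) * ‖u‖^2
        + β * ∫ x, |u x| ^ ((1:ℝ)/p) ∂μ) :
    ∀ u : Lp ℝ 2 μ, (∀ᵐ x ∂μ, |u x| ≤ M) → J 0 ≤ J u := by
  intro u hu
  have hp0 : 0 < p := lt_trans one_pos hp
  set g : Lp ℝ 2 μ := (ContinuousLinearMap.adjoint S) (S f - yd) with hgdef
  set m' : ℝ := max m 0 with hm'def
  have hm'0 : 0 ≤ m' := le_max_right _ _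
  have hβ' : m' * M ^ ((p - 1)/p) ≤ β := by
    rcases le_or_gt 0 m with h | h
    · rw [hm'def, max_eq_left h, mul_comm]; exact hβ₀
    · rw [hm'def, max_eq_right h.le, zero_mul]; exact hβ.le
  -- a.e. bound on g
  have hgb : ∀ᵐ x ∂μ, |g x| ≤ m' := by
    have h1 : eLpNormEssSup (g : Ω → ℝ) μ ≤ ENNReal.ofReal m' := by
      rw [← eLpNorm_exponent_top, hm]
      exact ENNReal.ofReal_le_ofReal (le_max_left _ _)
    filter_upwards [ae_le_eLpNormEssSup (f := (g : Ω → ℝ)) (μ := μ)] with x hx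
    have h2 : (‖g x‖₊ : ENNReal) ≤ ENNReal.ofReal m' := le_trans hx h1
    rw [ENNReal.ofReal] at h2
    have h3 := ENNReal.coe_le_coe.mp h2
    calc |g x| = (‖g x‖₊ : ℝ) := by rw [coe_nnnorm, Real.norm_eq_abs]
      _ ≤ (m'.toNNReal : ℝ) := NNReal.coe_le_coe.mpr h3
      _ = m' := Real.coe_toNNReal _ hm'0
  -- pointwise key inequality
  have key : ∀ᵐ x ∂μ, -(u x * g x) ≤ β * |u x| ^ ((1:ℝ)/p) := by
    filter_upwards [hu, hgb] with x h1 h2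
    have hux : (0:ℝ) ≤ |u x| := abs_nonneg _
    have h3 : -(u x * g x) ≤ |u x| * |g x| := by
      calc -(u x * g x) ≤ |u x * g x| := neg_le_abs _
        _ = |u x| * |g x| := abs_mul _ _
    have h4 : |u x| = |u x| ^ ((1:ℝ)/p) * |u x| ^ ((p - 1)/p) := by
      have hsum : (1:ℝ)/p + (p - 1)/p = 1 := by field_simp; ring
      rw [← Real.rpow_add' hux (by rw [hsum]; norm_num), hsum, Real.rpow_one]
    have h5 : |u x| ^ ((p - 1)/p) ≤ M ^ ((p - 1)/p) := by
      apply Real.rpow_le_rpow hux h1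
      apply div_nonneg (by linarith) hp0.le
    have h6 : (0:ℝ) ≤ |u x| ^ ((1:ℝ)/p) := Real.rpow_nonneg hux _
    calc -(u x * g x) ≤ |u x| * |g x| := h3
      _ ≤ |u x| * m' := mul_le_mul_of_nonneg_left h2 hux
      _ = |u x| ^ ((1:ℝ)/p) * |u x| ^ ((p - 1)/p) * m' := by rw [← h4]
      _ ≤ |u x| ^ ((1:ℝ)/p) * M ^ ((p - 1)/p) * m' := by
          apply mul_le_mul_of_nonneg_right _ hm'0
          exact mul_le_mul_of_nonneg_left h5 h6
      _ = |u x| ^ ((1:ℝ)/p) * (m' * M ^ ((p - 1)/p)) := by ring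
      _ ≤ |u x| ^ ((1:ℝ)/p) * β := mul_le_mul_of_nonneg_left hβ' h6
      _ = β * |u x| ^ ((1:ℝ)/p) := mul_comm _ _
  -- integrability
  have hint1 : Integrable (fun x => u x * g x) μ := by
    have := L2.integrable_inner (𝕜 := ℝ) u g
    simpa [RCLike.inner_apply, mul_comm] using this
  have hint2 : Integrable (fun x => |u x| ^ ((1:ℝ)/p)) μ := by
    apply Integrable.mono' (integrable_const (M ^ ((1:ℝ)/p)))
    · have hmeas := (Real.continuous_rpow_const
          (by positivity : (0:ℝ) ≤ (1:ℝ)/p)).comp_aestronglyMeasurable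
          (Lp.aestronglyMeasurable u).norm
      simpa [Real.norm_eq_abs, Function.comp] using hmeas
    · filter_upwards [hu] with x hx
      rw [Real.norm_eq_abs, abs_of_nonneg (Real.rpow_nonneg (abs_nonneg _) _)]
      exact Real.rpow_le_rpow (abs_nonneg _) hx (by positivity)
  have hineq : -(∫ x, u x * g x ∂μ) ≤ β * ∫ x, |u x| ^ ((1:ℝ)/p) ∂μ := by
    rw [← integral_neg, ← integral_const_mul]
    exact integral_mono_ae hint1.neg (hint2.const_mul β) key
  -- inner product identity
  have hinner : (inner ℝ (S u) (S f - yd) : ℝ) = ∫ x, u x * g x ∂μ := by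
    rw [← ContinuousLinearMap.adjoint_inner_right S u (S f - yd), ← hgdef,
      L2.inner_def]
    simp [RCLike.inner_apply, mul_comm]
  -- norm expansion
  have hexp : ‖S u + S f - yd‖^2
      = ‖S u‖^2 + 2 * (inner ℝ (S u) (S f - yd) : ℝ) + ‖S f - yd‖^2 := by
    rw [add_sub_assoc]
    exact norm_add_sq_real _ _
  -- value at zero
  have hz : J 0 = (1/2) * ‖S f - yd‖^2 := by
    rw [hJ 0]
    have h0 : (∫ x, |(0 : Lp ℝ 2 μ) x| ^ ((1:ℝ)/p) ∂μ) = 0 := by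
      rw [integral_congr_ae (g := fun _ => (0:ℝ))]
      · exact integral_zero _ _
      · filter_upwards [Lp.coeFn_zero (E := ℝ) (p := 2) (μ := μ)] with x hx
        rw [hx, Pi.zero_apply, abs_zero, Real.zero_rpow (one_div_ne_zero (ne_of_gt hp0))]
    rw [h0]
    simp
  rw [hz, hJ u, hexp]
  have h7 : (0:ℝ) ≤ ‖S u‖^2 := sq_nonneg _
  have h8 : (0:ℝ) ≤ ‖u‖^2 := sq_nonneg _
  nlinarith [hineq, hinner]
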